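/- Four-matrix trace as an overlap of a padded vector with a vector containing garbage: let A ∈ ℂ^{n×m}, B ∈ ℂ^{m×l}, C ∈ ℂ^{l×k}, D ∈ ℂ^{k×n} with A, B, C, D all nonzero. Let u := (B ⊗ Dᵀ)·vec(Cᵀ) / (‖B‖_F·‖C‖_F·‖D‖_F) ∈ ℂ^{mn}, let ξ ∈ ℂ^{mn·(lk−1)} be any vector such that the concatenated vector φ := u ⊕ ξ ∈ ℂ^{mn·lk} satisfies ‖φ‖₂ = 1, and let ψ := vec(conj(A)) ⊕ 0_{mn·(lk−1)} ∈ ℂ^{mn·lk}, where conj(A) is the entrywise complex conjugate of A. Then ⟨ψ/‖ψ‖₂, φ⟩ = Tr(A·B·C·D) / (‖A‖_F·‖B‖_F·‖C‖_F·‖D‖_F). -/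

import Mathlib

open Matrix BigOperators

namespace PaperMVT

theorem left_pos {m n : ℕ} (t : Fin (m * n)) : 0 < m := by
  rcases Nat.eq_zero_or_pos m with h | h
  · exfalso; subst h; have ht := t.isLt; simp at ht
  · exact h

theorem right_pos {m n : ℕ} (t : Fin (m * n)) : 0 < n := by
  rcases Nat.eq_zero_or_pos n with h | h
  · exfalso; subst h; have ht := t.isLt; simp at ht
  · exact h

theorem idx_lt {a b x y : ℕ} (hx : x < a) (hy : y < b) : b * x + y < b * a :=
  calc b * x + y < b * x + b := Nat.add_lt_add_left hy _
    _ = b * (x + 1) := by ring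
    _ ≤ b * a := Nat.mul_le_mul le_rfl hx

theorem idx_lt' {a b x y : ℕ} (hx : x < a) (hy : y < b) : b * x + y < a * b :=
  lt_of_lt_of_le (idx_lt hx hy) (le_of_eq (Nat.mul_comm b a))

/-- Column-major vectorization: `vec A (m*j+i) = A i j`. -/
noncomputable def vec {m n : ℕ} (A : Matrix (Fin m) (Fin n) ℂ) : Fin (m * n) → ℂ :=
  fun t => A ⟨(t : ℕ) % m, Nat.mod_lt _ (left_pos t)⟩
    ⟨(t : ℕ) / m, Nat.div_lt_of_lt_mul t.isLt⟩

/-- Kronecker product with flat indexing: `(kron A B) (p*i+k) (q*j+l) = A i j * B k l`. -/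
noncomputable def kron {m n p q : ℕ} (A : Matrix (Fin m) (Fin n) ℂ)
    (B : Matrix (Fin p) (Fin q) ℂ) : Matrix (Fin (m * p)) (Fin (n * q)) ℂ :=
  Matrix.of fun r c =>
    A ⟨(r : ℕ) / p, Nat.div_lt_of_lt_mul (Nat.mul_comm m p ▸ r.isLt)⟩
      ⟨(c : ℕ) / q, Nat.div_lt_of_lt_mul (Nat.mul_comm n q ▸ c.isLt)⟩ *
    B ⟨(r : ℕ) % p, Nat.mod_lt _ (right_pos r)⟩
      ⟨(c : ℕ) % q, Nat.mod_lt _ (right_pos c)⟩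

/-- Kronecker product of column vectors: `(kronVec x y) (b*i+k) = x i * y k`. -/
noncomputable def kronVec {a b : ℕ} (x : Fin a → ℂ) (y : Fin b → ℂ) : Fin (a * b) → ℂ :=
  fun t => x ⟨(t : ℕ) / b, Nat.div_lt_of_lt_mul (Nat.mul_comm a b ▸ t.isLt)⟩ *
    y ⟨(t : ℕ) % b, Nat.mod_lt _ (right_pos t)⟩

/-- A vector as a one-row matrix. -/
noncomputable def rowOf {N : ℕ} (v : Fin N → ℂ) : Matrix (Fin 1) (Fin N) ℂ :=
  Matrix.of fun _ c => v c

/-- Frobenius norm. -/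
noncomputable def frobNorm {r c : ℕ} (M : Matrix (Fin r) (Fin c) ℂ) : ℝ :=
  Real.sqrt (∑ i, ∑ j, Complex.normSq (M i j))

/-- Euclidean norm of a vector. -/
noncomputable def enorm2 {N : ℕ} (v : Fin N → ℂ) : ℝ :=
  Real.sqrt (∑ t, Complex.normSq (v t))

/-- Standard Hermitian inner product, conjugate-linear in the first argument. -/
noncomputable def cinner {N : ℕ} (x y : Fin N → ℂ) : ℂ :=
  ∑ t, (starRingEnd ℂ) (x t) * y t

/-- Matrices of arbitrary (dependent) dimensions. -/
def MatS : Type := Σ r c : ℕ, Matrix (Fin r) (Fin c) ℂ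

noncomputable def toS {r c : ℕ} (M : Matrix (Fin r) (Fin c) ℂ) : MatS := ⟨r, c, M⟩

noncomputable def kronS (M N : MatS) : MatS :=
  ⟨M.1 * N.1, M.2.1 * N.2.1, kron M.2.2 N.2.2⟩

/-- `(vec M)^T` as a one-row matrix, packaged. -/
noncomputable def vecRowS (M : MatS) : MatS := ⟨1, M.1 * M.2.1, rowOf (vec M.2.2)⟩

/-- `F^(p)(X₁,…,X_p) = X₁ ⊗ (vec F^(p-1)(X₂,…,X_p))^T`, on a nonempty list. -/
noncomputable def Ffun : List MatS → MatS
  | [] => ⟨1, 1, 1⟩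
  | [X] => X
  | X :: Y :: rest => kronS X (vecRowS (Ffun (Y :: rest)))

/-- Entry of a packaged matrix, extended by zero. -/
noncomputable def padM (M : MatS) (i j : ℕ) : ℂ :=
  if h : i < M.1 ∧ j < M.2.1 then M.2.2 ⟨i, h.1⟩ ⟨j, h.2⟩ else 0

/-- Entry of a vector, extended by zero. -/
noncomputable def padV {N : ℕ} (v : Fin N → ℂ) (t : ℕ) : ℂ :=
  if h : t < N then v ⟨t, h⟩ else 0

/-- Product `A (a+1) * A (a+2) * ⋯ * A (a+len)` of a chain of matrices. -/
noncomputable def matProdLen (n : ℕ → ℕ) (A : ∀ i : ℕ, Matrix (Fin (n (i - 1))) (Fin (n i)) ℂ)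
    (a : ℕ) : (len : ℕ) → Matrix (Fin (n a)) (Fin (n (a + len))) ℂ
  | 0 => show Matrix (Fin (n a)) (Fin (n (a + 0))) ℂ from (1 : Matrix (Fin (n a)) (Fin (n a)) ℂ)
  | len + 1 =>
      show Matrix (Fin (n a)) (Fin (n (a + (len + 1)))) ℂ from
        matProdLen n A a len *
          (show Matrix (Fin (n (a + len))) (Fin (n (a + len + 1))) ℂ from A (a + len + 1))



theorem sum_fin_mul {M : Type*} [AddCommMonoid M] {a b : ℕ} (f : Fin (a * b) → M) :
    ∑ t, f t = ∑ x : Fin a, ∑ y : Fin b, f ⟨(y : ℕ) + b * (x : ℕ), by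
      have := idx_lt' x.isLt y.isLt; omega⟩ := by
  rw [← Equiv.sum_comp finProdFinEquiv f, Fintype.sum_prod_type]
  rfl

theorem dec_mod {b : ℕ} (x : ℕ) (y : Fin b) : ((y : ℕ) + b * x) % b = y := by
  rw [Nat.add_mul_mod_self_left, Nat.mod_eq_of_lt y.isLt]

theorem dec_div {b : ℕ} (x : ℕ) (y : Fin b) : ((y : ℕ) + b * x) / b = x := by
  rw [Nat.add_mul_div_left _ _ y.pos, Nat.div_eq_of_lt y.isLt, Nat.zero_add]

theorem trace4 {n m l k : ℕ}
    (A : Matrix (Fin n) (Fin m) ℂ) (B : Matrix (Fin m) (Fin l) ℂ)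
    (C : Matrix (Fin l) (Fin k) ℂ) (D : Matrix (Fin k) (Fin n) ℂ) :
    Matrix.trace (A*B*C*D) =
      ∑ x : Fin m, ∑ y : Fin n, ∑ p : Fin l, ∑ q : Fin k,
        A y x * (B x p * D q y * C p q) := by
  simp only [Matrix.trace, Matrix.diag, Matrix.mul_apply, Finset.sum_mul, Finset.mul_sum]
  conv_rhs => rw [Finset.sum_comm]
  conv_rhs => enter [2, y]; rw [Finset.sum_comm]
  conv_rhs => enter [2, y, 2, p]; rw [Finset.sum_comm]
  conv_rhs => enter [2, y]; rw [Finset.sum_comm]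
  refine Finset.sum_congr rfl fun y _ => Finset.sum_congr rfl fun q _ =>
    Finset.sum_congr rfl fun p _ => Finset.sum_congr rfl fun x _ => by ring

theorem core {n m l k : ℕ}
    (A : Matrix (Fin n) (Fin m) ℂ) (B : Matrix (Fin m) (Fin l) ℂ)
    (C : Matrix (Fin l) (Fin k) ℂ) (D : Matrix (Fin k) (Fin n) ℂ) :
    ∑ t : Fin (m * n),
      (starRingEnd ℂ) ((vec (A.map (starRingEnd ℂ)) ∘ Fin.cast (Nat.mul_comm m n)) t) *
        ((kron B Dᵀ).mulVec (vec Cᵀ ∘ Fin.cast (Nat.mul_comm l k))) t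
      = Matrix.trace (A*B*C*D) := by
  rw [trace4 A B C D, sum_fin_mul]
  refine Finset.sum_congr rfl fun x _ => Finset.sum_congr rfl fun y _ => ?_
  simp only [Matrix.mulVec, dotProduct]
  rw [sum_fin_mul, Finset.mul_sum]
  refine Finset.sum_congr rfl fun p _ => ?_
  rw [Finset.mul_sum]
  refine Finset.sum_congr rfl fun q _ => ?_
  simp only [vec, kron, Function.comp_apply, Fin.coe_cast, Matrix.map_apply,
    Matrix.transpose_apply, Matrix.of_apply, dec_mod, dec_div, Fin.eta,
    Complex.conj_conj]

theorem enorm2_psi {n m s : ℕ} (A : Matrix (Fin n) (Fin m) ℂ) :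
    enorm2 (Fin.append (vec (A.map (starRingEnd ℂ)) ∘ Fin.cast (Nat.mul_comm m n))
      (0 : Fin s → ℂ)) = frobNorm A := by
  unfold enorm2 frobNorm
  congr 1
  rw [Fin.sum_univ_add]
  simp only [Fin.append_left, Fin.append_right, Pi.zero_apply, Complex.normSq_zero,
    Finset.sum_const_zero, add_zero]
  rw [sum_fin_mul]
  simp only [vec, Function.comp_apply, Fin.coe_cast, Matrix.map_apply, dec_mod, dec_div,
    Fin.eta, Complex.normSq_conj]
  rw [Finset.sum_comm]

theorem frobNorm_pos {r c : ℕ} {M : Matrix (Fin r) (Fin c) ℂ} (h : M ≠ 0) :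
    0 < frobNorm M := by
  obtain ⟨i, j, hij⟩ : ∃ i j, M i j ≠ 0 := by
    by_contra hc; push_neg at hc; exact h (by ext i j; simpa using hc i j)
  unfold frobNorm
  apply Real.sqrt_pos.mpr
  refine lt_of_lt_of_le (Complex.normSq_pos.mpr hij) ?_
  refine le_trans (Finset.single_le_sum (fun _ _ => Complex.normSq_nonneg _)
    (Finset.mem_univ j)) ?_
  exact Finset.single_le_sum (fun (i' : Fin r) _ => Finset.sum_nonneg
    fun _ _ => Complex.normSq_nonneg _) (Finset.mem_univ i)

/-- four-matrix trace as an overlap of a padded vector with a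
vector containing garbage. -/
theorem trace_four_as_overlap {n m l k : ℕ}
    (A : Matrix (Fin n) (Fin m) ℂ) (B : Matrix (Fin m) (Fin l) ℂ)
    (C : Matrix (Fin l) (Fin k) ℂ) (D : Matrix (Fin k) (Fin n) ℂ)
    (hA : A ≠ 0) (hB : B ≠ 0) (hC : C ≠ 0) (hD : D ≠ 0)
    (ξ : Fin (m * n * (l * k - 1)) → ℂ) :
    let u : Fin (m * n) → ℂ := fun i =>
      (kron B Dᵀ).mulVec (vec Cᵀ ∘ Fin.cast (Nat.mul_comm l k)) i /
        ((frobNorm B * frobNorm C * frobNorm D : ℝ) : ℂ)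
    let φ : Fin (m * n + m * n * (l * k - 1)) → ℂ := Fin.append u ξ
    let ψ : Fin (m * n + m * n * (l * k - 1)) → ℂ :=
      Fin.append (vec (A.map (starRingEnd ℂ)) ∘ Fin.cast (Nat.mul_comm m n))
        (0 : Fin (m * n * (l * k - 1)) → ℂ)
    enorm2 φ = 1 →
    cinner (((enorm2 ψ : ℝ) : ℂ)⁻¹ • ψ) φ =
      Matrix.trace (A * B * C * D) /
        ((frobNorm A * frobNorm B * frobNorm C * frobNorm D : ℝ) : ℂ) := by
  intro u φ ψ hφ
  have hψ : enorm2 ψ = frobNorm A := enorm2_psi A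
  have hc : cinner (((enorm2 ψ : ℝ) : ℂ)⁻¹ • ψ) φ = ((enorm2 ψ : ℝ) : ℂ)⁻¹ * cinner ψ φ := by
    unfold cinner
    rw [Finset.mul_sum]
    refine Finset.sum_congr rfl fun t _ => ?_
    simp only [Pi.smul_apply, smul_eq_mul, _root_.map_mul, map_inv₀, Complex.conj_ofReal]
    ring
  have hin : cinner ψ φ = Matrix.trace (A * B * C * D) /
      ((frobNorm B * frobNorm C * frobNorm D : ℝ) : ℂ) := by
    unfold cinner
    rw [Fin.sum_univ_add]
    simp only [ψ, φ, u, Fin.append_left, Fin.append_right, Pi.zero_apply, map_zero,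
      zero_mul, Finset.sum_const_zero, add_zero]
    simp only [div_eq_mul_inv, ← mul_assoc]
    rw [← Finset.sum_mul, core A B C D, ← div_eq_mul_inv]
  rw [hc, hin, hψ]
  have hA : (frobNorm A : ℝ) ≠ 0 := ne_of_gt (frobNorm_pos hA)
  have hB : (frobNorm B : ℝ) ≠ 0 := ne_of_gt (frobNorm_pos hB)
  have hC : (frobNorm C : ℝ) ≠ 0 := ne_of_gt (frobNorm_pos hC)
  have hD : (frobNorm D : ℝ) ≠ 0 := ne_of_gt (frobNorm_pos hD)
  push_cast
  field_simp


end PaperMVT
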